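/- For natural numbers m ≤ n and all real x, U_m(x)·U_n(x) = ∑_{k=0}^{m} U_{n−m+2k}(x). -/

import Mathlib

open Polynomial

lemma two_X_mul_chebU (j : ℤ) :
    2 * X * Polynomial.Chebyshev.U ℝ j
      = Polynomial.Chebyshev.U ℝ (j + 1) + Polynomial.Chebyshev.U ℝ (j - 1) := by
  linear_combination -Polynomial.Chebyshev.U_add_one ℝ j

lemma chebU_mul_aux (m : ℕ) (n : ℤ) :
    Polynomial.Chebyshev.U ℝ m * Polynomial.Chebyshev.U ℝ n
      = ∑ k ∈ Finset.range (m + 1), Polynomial.Chebyshev.U ℝ (n - m + 2 * k) := by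
  induction m using Nat.twoStepInduction generalizing n with
  | zero => simp [Polynomial.Chebyshev.U_zero]
  | one =>
      have h := two_X_mul_chebU n
      simp only [Finset.sum_range_succ, Finset.sum_range_one]
      push_cast
      rw [show Polynomial.Chebyshev.U ℝ (1 : ℤ) = 2 * X from Polynomial.Chebyshev.U_one ℝ]
      rw [h]
      ring_nf
  | more m ih1 ih2 =>
      have ih2' : ∀ n : ℤ, Polynomial.Chebyshev.U ℝ ((m:ℤ)+1) * Polynomial.Chebyshev.U ℝ n
          = ∑ k ∈ Finset.range (m + 2), Polynomial.Chebyshev.U ℝ (n - ((m:ℤ)+1) + 2 * k) := by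
        intro n'; have := ih2 n'; push_cast at this ⊢; convert this using 2 <;> push_cast <;> ring_nf
      have hrec : Polynomial.Chebyshev.U ℝ ((m : ℤ) + 2)
          = 2 * X * Polynomial.Chebyshev.U ℝ ((m : ℤ) + 1) - Polynomial.Chebyshev.U ℝ m :=
        Polynomial.Chebyshev.U_add_two ℝ m
      have key : Polynomial.Chebyshev.U ℝ ((m : ℤ) + 2) * Polynomial.Chebyshev.U ℝ n
          = ∑ k ∈ Finset.range (m + 2), (Polynomial.Chebyshev.U ℝ (n - (m+1) + 2*k + 1)
              + Polynomial.Chebyshev.U ℝ (n - (m+1) + 2*k - 1))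
            - ∑ k ∈ Finset.range (m + 1), Polynomial.Chebyshev.U ℝ (n - m + 2 * k) := by
        rw [hrec, sub_mul, mul_assoc, ih1, ih2', Finset.mul_sum]
        congr 1
        · apply Finset.sum_congr rfl
          intro k _
          have := two_X_mul_chebU (n - (m + 1) + 2 * k)
          push_cast at this ⊢
          linear_combination this
      push_cast
      rw [key]
      set f : ℕ → Polynomial ℝ := fun k => Polynomial.Chebyshev.U ℝ (n - ((m:ℤ)+2) + 2*(k:ℤ))
        with hf
      have e1 : ∑ k ∈ Finset.range (m + 2), Polynomial.Chebyshev.U ℝ (n - (m+1) + 2*k + 1)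
          = ∑ k ∈ Finset.range (m + 2), f (k+1) := by
        apply Finset.sum_congr rfl; intro k _; simp only [hf]; congr 1; push_cast; ring
      have e2 : ∑ k ∈ Finset.range (m + 2), Polynomial.Chebyshev.U ℝ (n - (m+1) + 2*k - 1)
          = ∑ k ∈ Finset.range (m + 2), f k := by
        apply Finset.sum_congr rfl; intro k _; simp only [hf]; congr 1; push_cast; ring
      have e3 : ∑ k ∈ Finset.range (m + 1), Polynomial.Chebyshev.U ℝ (n - m + 2 * k)
          = ∑ k ∈ Finset.range (m + 1), f (k+1) := by
        apply Finset.sum_congr rfl; intro k _; simp only [hf]; congr 1; push_cast; ring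
      have e4 : ∑ k ∈ Finset.range (m + 2 + 1), Polynomial.Chebyshev.U ℝ (n - (m + 2) + 2 * k)
          = ∑ k ∈ Finset.range (m + 2 + 1), f k := by
        apply Finset.sum_congr rfl; intro k _; simp only [hf]
      rw [Finset.sum_add_distrib, e1, e2, e3, e4,
        Finset.sum_range_succ (fun k => f (k+1)) (m+1), Finset.sum_range_succ f (m+2)]
      simp only [show m+1+1 = m+2 from rfl]
      abel

theorem chebyshevU_mul (m n : ℕ) (hmn : m ≤ n) (x : ℝ) :
    (Polynomial.Chebyshev.U ℝ m).eval x * (Polynomial.Chebyshev.U ℝ n).eval x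
      = ∑ k ∈ Finset.range (m + 1), (Polynomial.Chebyshev.U ℝ ((n : ℤ) - m + 2 * k)).eval x := by
  have h := congrArg (Polynomial.eval x) (chebU_mul_aux m n)
  simpa [Polynomial.eval_finset_sum] using h
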